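/- Let G = (V, E) be a finite simple claw-free graph with an operator realization. Then for every u ∈ ℂ: T_G(u)·T_G(−u) = Σ (−u²)^{|S|}·h(S)·h(S'), where the sum ranges over all ordered pairs (S, S') of independent sets of G such that every connected component of the induced subgraph G[S Δ S'] is an even hole of G. (The set-symmetric representation of the generalized characteristic polynomial, established in the proof of Lemma 16.) -/

import Mathlib

set_option linter.unusedSectionVars false
set_option linter.unusedVariables false
set_option maxHeartbeats 1000000


open scoped Classical
open scoped symmDiff

universe u

/-- `G` is claw-free: no vertex has three pairwise distinct, pairwise non-adjacent neighbors. -/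
def ClawFree {V : Type u} (G : SimpleGraph V) : Prop :=
  ¬ ∃ c x y z : V, x ≠ y ∧ x ≠ z ∧ y ≠ z ∧
    G.Adj c x ∧ G.Adj c y ∧ G.Adj c z ∧ ¬ G.Adj x y ∧ ¬ G.Adj x z ∧ ¬ G.Adj y z

/-- `S` is an independent set of `G`. -/
def IsIndep {V : Type u} (G : SimpleGraph V) (S : Finset V) : Prop :=
  ∀ u ∈ S, ∀ v ∈ S, ¬ G.Adj u v

/-- The product `h(S) = ∏_{v ∈ S} h v`, well defined when the factors pairwise commute. -/
noncomputable def hProd {V : Type u} {d : ℕ} (h : V → Matrix (Fin d) (Fin d) ℂ)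
    (S : Finset V) : Matrix (Fin d) (Fin d) ℂ :=
  if hc : (S : Set V).Pairwise fun u v => Commute (h u) (h v) then S.noncommProd h hc
  else 0

/-- `C` induces a cycle of length at least 4 in `G`: it has at least four vertices, the
induced subgraph is connected, and every vertex of `C` has exactly two neighbors in `C`. -/
def IsHole {V : Type u} [DecidableEq V] (G : SimpleGraph V) (C : Finset V) : Prop :=
  4 ≤ C.card ∧ (G.induce (C : Set V)).Connected ∧
    ∀ v ∈ C, (C.filter fun u => G.Adj v u).card = 2

/-- `C` is an even hole of `G`: it induces a cycle of even length at least 4. -/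
def IsEvenHole {V : Type u} [DecidableEq V] (G : SimpleGraph V) (C : Finset V) : Prop :=
  IsHole G C ∧ Even C.card

/-- Every connected component of the subgraph of `G` induced on `W` is an even hole of `G`:
equivalently, `W` is the union of a family of pairwise disjoint, pairwise non-adjacent even
holes. -/
def ComponentsAreEvenHoles {V : Type u} [DecidableEq V] (G : SimpleGraph V)
    (W : Finset V) : Prop :=
  ∃ 𝒳 : Finset (Finset V), (∀ C ∈ 𝒳, IsEvenHole G C) ∧
    (∀ C ∈ 𝒳, ∀ C' ∈ 𝒳, C ≠ C' → ∀ x ∈ C, ∀ y ∈ C', x ≠ y ∧ ¬ G.Adj x y) ∧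
    W = 𝒳.sup id

/-- The transfer operator `T_G(u) = Σ_S (−u)^{|S|}·h(S)`, summed over all independent sets
`S` of `G`. -/
noncomputable def transferOp {V : Type u} {d : ℕ} [Fintype V] [DecidableEq V]
    (G : SimpleGraph V) (h : V → Matrix (Fin d) (Fin d) ℂ) (u : ℂ) :
    Matrix (Fin d) (Fin d) ℂ :=
  ∑ S ∈ Finset.univ.filter (fun S : Finset V => IsIndep G S),
    (-u) ^ S.card • hProd h S

section Alg
variable {V : Type u} [DecidableEq V] {d : ℕ} {h : V → Matrix (Fin d) (Fin d) ℂ}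
  {G : SimpleGraph V}

lemma hProd_eq {S : Finset V} (hc : (S : Set V).Pairwise fun u v => Commute (h u) (h v)) :
    hProd h S = S.noncommProd h hc := dif_pos hc

lemma hProd_empty : hProd h (∅ : Finset V) = 1 := by
  rw [hProd_eq (by simp)]; simp

lemma pairwise_subset {S T : Finset V} (hc : (T : Set V).Pairwise fun u v => Commute (h u) (h v))
    (hST : S ⊆ T) : (S : Set V).Pairwise fun u v => Commute (h u) (h v) :=
  hc.mono (by exact_mod_cast hST)

lemma hProd_insert {a : V} {Y : Finset V} (ha : a ∉ Y)
    (hc : ((insert a Y : Finset V) : Set V).Pairwise fun u v => Commute (h u) (h v)) :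
    hProd h (insert a Y) = h a * hProd h Y := by
  rw [hProd_eq hc, hProd_eq (pairwise_subset hc (Finset.subset_insert _ _))]
  exact Finset.noncommProd_insert_of_notMem _ _ _ _ ha

lemma hProd_union {X Y : Finset V} (hd : Disjoint X Y)
    (hc : ((X ∪ Y : Finset V) : Set V).Pairwise fun u v => Commute (h u) (h v)) :
    hProd h (X ∪ Y) = hProd h X * hProd h Y := by
  rw [hProd_eq hc, hProd_eq (pairwise_subset hc Finset.subset_union_left),
    hProd_eq (pairwise_subset hc Finset.subset_union_right)]
  exact Finset.noncommProd_union_of_disjoint hd h hc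

lemma commute_hProd {a : V} {Y : Finset V}
    (hc : (Y : Set V).Pairwise fun u v => Commute (h u) (h v))
    (hay : ∀ y ∈ Y, Commute (h a) (h y)) : Commute (h a) (hProd h Y) := by
  rw [hProd_eq hc]
  exact Finset.noncommProd_commute _ _ _ _ hay

lemma hProd_sq {b : V → ℝ} (hsq : ∀ v, h v * h v = ((b v : ℂ)) ^ 2 • (1 : Matrix (Fin d) (Fin d) ℂ))
    {S : Finset V} (hc : (S : Set V).Pairwise fun u v => Commute (h u) (h v)) :
    hProd h S * hProd h S = (∏ v ∈ S, ((b v : ℂ)) ^ 2) • 1 := by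
  classical
  induction S using Finset.induction with
  | empty => simp [hProd_empty]
  | @insert a S ha ih =>
    have hcS : (S : Set V).Pairwise fun u v => Commute (h u) (h v) :=
      pairwise_subset hc (Finset.subset_insert _ _)
    have hay : ∀ y ∈ S, Commute (h a) (h y) := by
      intro y hy
      exact hc (by simp) (by simp [hy]) (by rintro rfl; exact ha hy)
    have hcm : Commute (h a) (hProd h S) := commute_hProd hcS hay
    rw [hProd_insert ha hc]
    calc h a * hProd h S * (h a * hProd h S)
        = h a * (hProd h S * h a) * hProd h S := by noncomm_ring
      _ = h a * (h a * hProd h S) * hProd h S := by rw [hcm.eq]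
      _ = (h a * h a) * (hProd h S * hProd h S) := by noncomm_ring
      _ = (((b a : ℂ))^2 • 1) * ((∏ v ∈ S, ((b v : ℂ))^2) • 1) := by rw [hsq, ih hcS]
      _ = (∏ v ∈ insert a S, ((b v : ℂ))^2) • 1 := by
          rw [Finset.prod_insert ha, smul_mul_smul_comm, one_mul]

/-- moving a single `h a` across `hProd h Y` picks up `(-1)^(#neighbors of a in Y)`. -/
lemma single_swap {a : V} {Y : Finset V}
    (hc : (Y : Set V).Pairwise fun u v => Commute (h u) (h v))
    (hanti : ∀ y ∈ Y, G.Adj a y → h a * h y = -(h y * h a))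
    (hco : ∀ y ∈ Y, ¬ G.Adj a y → h a * h y = h y * h a) :
    h a * hProd h Y = (-1 : ℂ) ^ (Y.filter (G.Adj a)).card • (hProd h Y * h a) := by
  classical
  induction Y using Finset.induction with
  | empty => simp [hProd_empty]
  | @insert y Y hy ih =>
    have hcY := pairwise_subset hc (Finset.subset_insert _ _)
    have ih' := ih hcY (fun z hz => hanti z (Finset.mem_insert_of_mem hz))
      (fun z hz => hco z (Finset.mem_insert_of_mem hz))
    have hstep : h a * h y = ((if G.Adj a y then (-1:ℂ) else 1)) • (h y * h a) := by
      by_cases hadj : G.Adj a y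
      · simp [hadj, hanti y (Finset.mem_insert_self _ _) hadj]
      · simp [hadj, hco y (Finset.mem_insert_self _ _) hadj]
    have hcard : ((insert y Y).filter (G.Adj a)).card
        = (if G.Adj a y then 1 else 0) + (Y.filter (G.Adj a)).card := by
      rw [Finset.filter_insert]
      by_cases hadj : G.Adj a y
      · rw [if_pos hadj, Finset.card_insert_of_notMem (by simp [hy])]; simp [hadj]; omega
      · rw [if_neg hadj]; simp [hadj]
    rw [hProd_insert hy hc]
    calc h a * (h y * hProd h Y) = (h a * h y) * hProd h Y := by rw [mul_assoc]
      _ = ((if G.Adj a y then (-1:ℂ) else 1)) • (h y * h a * hProd h Y) := by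
          rw [hstep, smul_mul_assoc]
      _ = ((if G.Adj a y then (-1:ℂ) else 1)) • (h y * (h a * hProd h Y)) := by
          rw [mul_assoc]
      _ = ((if G.Adj a y then (-1:ℂ) else 1)) •
            (h y * ((-1 : ℂ) ^ (Y.filter (G.Adj a)).card • (hProd h Y * h a))) := by rw [ih']
      _ = (((if G.Adj a y then (-1:ℂ) else 1)) * (-1 : ℂ) ^ (Y.filter (G.Adj a)).card) •
            (h y * hProd h Y * h a) := by
          rw [mul_smul_comm, smul_smul, mul_assoc]
      _ = (-1 : ℂ) ^ ((insert y Y).filter (G.Adj a)).card • (h y * hProd h Y * h a) := by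
          rw [hcard, pow_add]
          by_cases hadj : G.Adj a y <;> simp [hadj]

/-- moving `hProd h X` across `hProd h Y` picks up `(-1)^(#edges between X and Y)`. -/
lemma hProd_swap {X Y : Finset V}
    (hcX : (X : Set V).Pairwise fun u v => Commute (h u) (h v))
    (hcY : (Y : Set V).Pairwise fun u v => Commute (h u) (h v))
    (hanti : ∀ x ∈ X, ∀ y ∈ Y, G.Adj x y → h x * h y = -(h y * h x))
    (hco : ∀ x ∈ X, ∀ y ∈ Y, ¬ G.Adj x y → h x * h y = h y * h x) :
    hProd h X * hProd h Y
      = (-1 : ℂ) ^ (∑ x ∈ X, (Y.filter (G.Adj x)).card) • (hProd h Y * hProd h X) := by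
  classical
  induction X using Finset.induction with
  | empty => simp [hProd_empty]
  | @insert a X ha ih =>
    have hcX' := pairwise_subset hcX (Finset.subset_insert _ _)
    have ih' := ih hcX' (fun x hx => hanti x (Finset.mem_insert_of_mem hx))
      (fun x hx => hco x (Finset.mem_insert_of_mem hx))
    have hs := single_swap (G := G) (a := a) hcY
      (hanti a (Finset.mem_insert_self _ _)) (hco a (Finset.mem_insert_self _ _))
    rw [hProd_insert ha hcX]
    calc h a * hProd h X * hProd h Y = h a * (hProd h X * hProd h Y) := by rw [mul_assoc]
      _ = (-1 : ℂ) ^ (∑ x ∈ X, (Y.filter (G.Adj x)).card) •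
            (h a * hProd h Y * hProd h X) := by rw [ih', mul_smul_comm, mul_assoc]
      _ = ((-1 : ℂ) ^ (∑ x ∈ X, (Y.filter (G.Adj x)).card) *
            (-1 : ℂ) ^ (Y.filter (G.Adj a)).card) •
            (hProd h Y * h a * hProd h X) := by
          rw [hs, smul_mul_assoc, smul_smul, mul_comm ((-1:ℂ) ^ _)]
      _ = (-1 : ℂ) ^ (∑ x ∈ insert a X, (Y.filter (G.Adj x)).card) •
            (hProd h Y * (h a * hProd h X)) := by
          rw [Finset.sum_insert ha, pow_add,
            mul_comm ((-1:ℂ) ^ (Finset.filter (G.Adj a) Y).card), mul_assoc (hProd h Y)]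

end Alg

section Comb
variable {V : Type u} [Fintype V] [DecidableEq V] {G : SimpleGraph V}

/-- degree of `v` into the finset `D`. -/
noncomputable def degIn (G : SimpleGraph V) (D : Finset V) (v : V) : ℕ := (D.filter (G.Adj v)).card

/-- adjacency restricted to `D`. -/
def rIn (G : SimpleGraph V) (D : Finset V) (a b : V) : Prop := G.Adj a b ∧ a ∈ D ∧ b ∈ D

lemma rIn_symm {D : Finset V} : Symmetric (rIn G D) := by
  rintro a b ⟨hab, ha, hb⟩; exact ⟨hab.symm, hb, ha⟩

/-- the connected component of `v` inside `D`. -/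
noncomputable def comp (G : SimpleGraph V) (D : Finset V) (v : V) : Finset V :=
  D.filter (fun w => Relation.ReflTransGen (rIn G D) v w)

lemma comp_subset {D : Finset V} {v : V} : comp G D v ⊆ D := Finset.filter_subset _ _

lemma mem_comp {D : Finset V} {v w : V} :
    w ∈ comp G D v ↔ w ∈ D ∧ Relation.ReflTransGen (rIn G D) v w := by
  simp [comp]

lemma mem_comp_self {D : Finset V} {v : V} (hv : v ∈ D) : v ∈ comp G D v :=
  mem_comp.mpr ⟨hv, Relation.ReflTransGen.refl⟩

lemma comp_closed {D : Finset V} {v w x : V} (hw : w ∈ comp G D v)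
    (hadj : G.Adj w x) (hx : x ∈ D) : x ∈ comp G D v := by
  rw [mem_comp] at hw ⊢
  exact ⟨hx, hw.2.tail ⟨hadj, hw.1, hx⟩⟩

lemma comp_eq_of_mem {D : Finset V} {v w : V} (hw : w ∈ comp G D v) :
    comp G D w = comp G D v := by
  rw [mem_comp] at hw
  ext x
  rw [mem_comp, mem_comp]
  constructor
  · rintro ⟨hx, hr⟩; exact ⟨hx, hw.2.trans hr⟩
  · rintro ⟨hx, hr⟩
    exact ⟨hx, ((show Relation.ReflTransGen (rIn G D) w v by haveI : Std.Symm (rIn G D) := ⟨fun a b hab => rIn_symm hab⟩; exact Std.Symm.symm (r := Relation.ReflTransGen (rIn G D)) _ _ hw.2).trans hr)⟩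

/-- neighbors in `D` of a member of a component lie in the component, so the two
degree counts agree. -/
lemma filter_comp_eq {D : Finset V} {v w : V} (hw : w ∈ comp G D v) :
    (comp G D v).filter (G.Adj w) = D.filter (G.Adj w) := by
  ext x
  simp only [Finset.mem_filter]
  exact ⟨fun ⟨hx, ha⟩ => ⟨comp_subset hx, ha⟩, fun ⟨hx, ha⟩ => ⟨comp_closed hw ha hx, ha⟩⟩

lemma degIn_comp {D : Finset V} {v w : V} (hw : w ∈ comp G D v) :
    degIn G (comp G D v) w = degIn G D w := by
  unfold degIn; rw [filter_comp_eq hw]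

/-- chains within `D` starting at `v` can be refined to chains within `comp G D v`. -/
lemma reach_in_comp {D : Finset V} {v w : V} (hv : v ∈ D)
    (hr : Relation.ReflTransGen (rIn G D) v w) :
    Relation.ReflTransGen (rIn G (comp G D v)) v w := by
  induction hr with
  | refl => exact Relation.ReflTransGen.refl
  | @tail b c hvb hbc ih =>
    have hb : b ∈ comp G D v := mem_comp.mpr ⟨hbc.2.1, hvb⟩
    have hc : c ∈ comp G D v := comp_closed hb hbc.1 hbc.2.2
    exact ih.tail ⟨hbc.1, hb, hc⟩

/-- a finset that is chain-connected from a vertex induces a connected subgraph. -/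
lemma connected_of_reach {C : Finset V} {v : V} (hv : v ∈ C)
    (hconn : ∀ w ∈ C, Relation.ReflTransGen (rIn G C) v w) :
    (G.induce (C : Set V)).Connected := by
  have hv' : v ∈ (C : Set V) := by exact_mod_cast hv
  rw [SimpleGraph.connected_iff]
  refine ⟨fun x y => ?_, ⟨⟨v, hv'⟩⟩⟩
  have key : ∀ w, Relation.ReflTransGen (rIn G C) v w → ∀ hw : w ∈ (C : Set V),
      (G.induce (C : Set V)).Reachable ⟨v, hv'⟩ ⟨w, hw⟩ := by
    intro w hr
    induction hr with
    | refl => intro _; exact SimpleGraph.Reachable.refl _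
    | @tail b c hvb hbc ih =>
      intro hw
      have hb : b ∈ (C : Set V) := by exact_mod_cast hbc.2.1
      refine (ih hb).trans (SimpleGraph.Adj.reachable ?_)
      exact hbc.1
  obtain ⟨x, hx⟩ := x
  obtain ⟨y, hy⟩ := y
  exact ((key x (hconn x (by exact_mod_cast hx)) hx).symm).trans
    (key y (hconn y (by exact_mod_cast hy)) hy)


/-- a chain-connected finset with max degree 2 and a vertex of degree ≤ 1 has degree
sum `2*(card - 1)` (it is a path). -/
lemma tree_count : ∀ (n : ℕ) (P : Finset V), P.card = n →
    ∀ v₀ ∈ P, (∀ w ∈ P, Relation.ReflTransGen (rIn G P) v₀ w) →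
    (∀ v ∈ P, degIn G P v ≤ 2) → (∃ w ∈ P, degIn G P w ≤ 1) →
    ∑ v ∈ P, degIn G P v = 2 * (P.card - 1) := by
  intro n
  induction n using Nat.strong_induction_on with
  | _ n ih =>
  rintro P hcard v₀ hv₀ hconn hdeg ⟨w, hwP, hw1⟩
  by_cases hsmall : P.card ≤ 1
  · have h1 : P.card = 1 := le_antisymm hsmall (Finset.card_pos.mpr ⟨v₀, hv₀⟩)
    obtain ⟨a, rfl⟩ := Finset.card_eq_one.mp h1
    simp [degIn, Finset.filter_singleton]
  · push_neg at hsmall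
    -- the defective vertex has degree exactly 1
    have hge : 1 ≤ degIn G P w := by
      rw [degIn, Nat.one_le_iff_ne_zero, Ne, Finset.card_eq_zero,
        ← Ne, ← Finset.nonempty_iff_ne_empty]
      obtain ⟨u, huP, hune⟩ := Finset.exists_mem_ne hsmall w
      by_cases hwv : w = v₀
      · subst hwv
        rcases (hconn u huP).cases_head with hh | ⟨c, hc, -⟩
        · exact absurd hh.symm hune
        · exact ⟨c, Finset.mem_filter.mpr ⟨hc.2.2, hc.1⟩⟩
      · rcases (hconn w hwP).cases_tail with hh | ⟨c, -, hc⟩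
        · exact absurd hh hwv
        · exact ⟨c, Finset.mem_filter.mpr ⟨hc.2.1, hc.1.symm⟩⟩
    have hdw : degIn G P w = 1 := le_antisymm hw1 hge
    obtain ⟨nb, hnb⟩ := Finset.card_eq_one.mp hdw
    have hnbP : nb ∈ P ∧ G.Adj w nb := by
      have : nb ∈ P.filter (G.Adj w) := by rw [hnb]; exact Finset.mem_singleton_self _
      exact ⟨(Finset.mem_filter.mp this).1, (Finset.mem_filter.mp this).2⟩
    have hnbw : nb ≠ w := fun hh => G.irrefl (hh ▸ hnbP.2)
    have huniq : ∀ x ∈ P, G.Adj w x → x = nb := by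
      intro x hx ha
      have : x ∈ P.filter (G.Adj w) := Finset.mem_filter.mpr ⟨hx, ha⟩
      rw [hnb] at this; exact Finset.mem_singleton.mp this
    set P' := P.erase w with hP'
    have hnbP' : nb ∈ P' := Finset.mem_erase.mpr ⟨hnbw, hnbP.1⟩
    set f : V → V := fun z => if z = w then nb else z with hf
    -- transferring chains from P to P'
    have cl : ∀ {z z' : V}, Relation.ReflTransGen (rIn G P) z z' →
        Relation.ReflTransGen (rIn G P') (f z) (f z') := by
      intro z z' hr
      induction hr with
      | refl => exact Relation.ReflTransGen.refl
      | @tail b c hzb hbc ihc =>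
        by_cases hb : b = w
        · have hc : c = nb := huniq c hbc.2.2 (hb ▸ hbc.1)
          have : f c = f b := by simp [hf, hb, hc, hnbw]
          rwa [this]
        · by_cases hc : c = w
          · have hbnb : b = nb := huniq b hbc.2.1 (hc ▸ hbc.1).symm
            have : f c = f b := by simp [hf, hb, hc, hbnb]
            rwa [this]
          · have : rIn G P' b c :=
              ⟨hbc.1, Finset.mem_erase.mpr ⟨hb, hbc.2.1⟩, Finset.mem_erase.mpr ⟨hc, hbc.2.2⟩⟩
            have hfb : f b = b := by simp [hf, hb]
            have hfc : f c = c := by simp [hf, hc]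
            exact ihc.tail (by rwa [hfb, hfc])
    have hv₀' : f v₀ ∈ P' := by
      by_cases hv : v₀ = w
      · simpa [hf, hv] using hnbP'
      · rw [show f v₀ = v₀ by simp [hf, hv]]; exact Finset.mem_erase.mpr ⟨hv, hv₀⟩
    have hconn' : ∀ x ∈ P', Relation.ReflTransGen (rIn G P') (f v₀) x := by
      intro x hx
      have hxw : x ≠ w := (Finset.mem_erase.mp hx).1
      have := cl (hconn x (Finset.mem_of_mem_erase hx))
      rwa [show f x = x by simp [hf, hxw]] at this
    -- degree bookkeeping
    have hfe : ∀ v, P'.filter (G.Adj v) = (P.filter (G.Adj v)).erase w := by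
      intro v; rw [hP', Finset.filter_erase]
    have hdeg_ne : ∀ v ∈ P, v ≠ nb → degIn G P' v = degIn G P v := by
      intro v hvP hv
      have hwnot : w ∉ P.filter (G.Adj v) := by
        intro hmem
        exact hv (huniq v hvP (Finset.mem_filter.mp hmem).2.symm)
      rw [degIn, degIn, hfe, Finset.erase_eq_of_notMem hwnot]
    have hwmem : w ∈ P.filter (G.Adj nb) := Finset.mem_filter.mpr ⟨hwP, hnbP.2.symm⟩
    have hdeg_nb : degIn G P' nb + 1 = degIn G P nb := by
      rw [degIn, degIn, hfe, Finset.card_erase_of_mem hwmem]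
      have : 1 ≤ (P.filter (G.Adj nb)).card := Finset.card_pos.mpr ⟨w, hwmem⟩
      omega
    have hdeg' : ∀ v ∈ P', degIn G P' v ≤ 2 := by
      intro v hv
      by_cases hvnb : v = nb
      · have h2 := hdeg nb hnbP.1
        rw [hvnb]
        omega
      · rw [hdeg_ne v (Finset.mem_of_mem_erase hv) hvnb]
        exact hdeg v (Finset.mem_of_mem_erase hv)
    have hdef' : ∃ x ∈ P', degIn G P' x ≤ 1 := by
      refine ⟨nb, hnbP', ?_⟩
      have := hdeg nb hnbP.1; omega
    have hcP' : P'.card = n - 1 := by rw [hP', Finset.card_erase_of_mem hwP, hcard]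
    have hlt : n - 1 < n := by omega
    have hIH := ih (n - 1) hlt P' hcP' (f v₀) hv₀' hconn' hdeg' hdef'
    -- assemble the sums
    have hsum1 : ∑ v ∈ P, degIn G P v = degIn G P w + ∑ v ∈ P', degIn G P v :=
      (Finset.add_sum_erase P _ hwP).symm
    have hsum2 : ∑ v ∈ P', degIn G P v
        = ∑ v ∈ P', (degIn G P' v + if v = nb then 1 else 0) := by
      refine Finset.sum_congr rfl ?_
      intro v hv
      by_cases hvnb : v = nb
      · subst hvnb; simp [← hdeg_nb]
      · simp [hdeg_ne v (Finset.mem_of_mem_erase hv) hvnb, hvnb]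
    have hsum3 : ∑ v ∈ P', (degIn G P' v + if v = nb then 1 else 0)
        = (∑ v ∈ P', degIn G P' v) + 1 := by
      rw [Finset.sum_add_distrib, Finset.sum_ite_eq' P' nb (fun _ => 1), if_pos hnbP']
    have hn2 : 2 ≤ n := hcard ▸ hsmall
    rw [hsum1, hsum2, hsum3, hIH, hdw, hcP', hcard]
    omega

end Comb


section Glue
variable {V : Type u} [Fintype V] [DecidableEq V] {G : SimpleGraph V}

lemma double_count (X Y : Finset V) :
    ∑ x ∈ X, (Y.filter (G.Adj x)).card = ∑ y ∈ Y, (X.filter (G.Adj y)).card := by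
  simp_rw [Finset.card_filter]
  rw [Finset.sum_comm]
  refine Finset.sum_congr rfl fun y _ => Finset.sum_congr rfl fun x _ => ?_
  simp [SimpleGraph.adj_comm]

lemma pcOfIndep {d : ℕ} {h : V → Matrix (Fin d) (Fin d) ℂ}
    (hcomm : ∀ x y, x ≠ y → ¬ G.Adj x y → h x * h y = h y * h x)
    {S : Finset V} (hS : IsIndep G S) :
    (S : Set V).Pairwise fun x y => Commute (h x) (h y) := by
  intro x hx y hy hxy
  exact hcomm x y hxy (hS x (by exact_mod_cast hx) y (by exact_mod_cast hy))

/-- neighbors (within `D`) of a vertex of `A = S \ S'` lie in `B = S' \ S`. -/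
lemma filter_sub_B {S S' : Finset V} (hS : IsIndep G S)
    {v : V} (hv : v ∈ S \ S') {x : V}
    (hx : x ∈ ((S \ S') ∪ (S' \ S)).filter (G.Adj v)) : x ∈ S' \ S := by
  rw [Finset.mem_filter, Finset.mem_union] at hx
  rcases hx.1 with hxa | hxb
  · exact absurd hx.2 (hS v (Finset.mem_sdiff.mp hv).1 x (Finset.mem_sdiff.mp hxa).1)
  · exact hxb

lemma deg_le_two (hcf : ClawFree G) {S S' : Finset V}
    (hS : IsIndep G S) (hS' : IsIndep G S') :
    ∀ v ∈ (S \ S') ∪ (S' \ S), degIn G ((S \ S') ∪ (S' \ S)) v ≤ 2 := by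
  -- symmetric auxiliary claim
  have aux : ∀ (T T' : Finset V), IsIndep G T → IsIndep G T' →
      ∀ v ∈ T \ T', degIn G ((T \ T') ∪ (T' \ T)) v ≤ 2 := by
    intro T T' hT hT' v hv
    by_contra hgt
    push_neg at hgt
    obtain ⟨t, hts, htc⟩ := Finset.exists_subset_card_eq hgt
    obtain ⟨x, y, z, hxy, hxz, hyz, rfl⟩ := Finset.card_eq_three.mp htc
    have hx := hts (by simp : x ∈ ({x, y, z} : Finset V))
    have hy := hts (by simp : y ∈ ({x, y, z} : Finset V))
    have hz := hts (by simp : z ∈ ({x, y, z} : Finset V))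
    have hx' := filter_sub_B hT hv hx
    have hy' := filter_sub_B hT hv hy
    have hz' := filter_sub_B hT hv hz
    refine hcf ⟨v, x, y, z, hxy, hxz, hyz, (Finset.mem_filter.mp hx).2,
      (Finset.mem_filter.mp hy).2, (Finset.mem_filter.mp hz).2,
      hT' x (Finset.mem_sdiff.mp hx').1 y (Finset.mem_sdiff.mp hy').1,
      hT' x (Finset.mem_sdiff.mp hx').1 z (Finset.mem_sdiff.mp hz').1,
      hT' y (Finset.mem_sdiff.mp hy').1 z (Finset.mem_sdiff.mp hz').1⟩
  intro v hv
  rcases Finset.mem_union.mp hv with hva | hvb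
  · exact aux S S' hS hS' v hva
  · have := aux S' S hS' hS v hvb
    rwa [degIn, Finset.union_comm, ← degIn] at this

end Glue


section Glue2
variable {V : Type u} [Fintype V] [DecidableEq V] {G : SimpleGraph V}

lemma filterAB {A B : Finset V} (hA : ∀ x ∈ A, ∀ y ∈ A, ¬ G.Adj x y) {v : V} (hv : v ∈ A) :
    (A ∪ B).filter (G.Adj v) = B.filter (G.Adj v) := by
  ext x
  simp only [Finset.mem_filter, Finset.mem_union]
  constructor
  · rintro ⟨hx | hx, ha⟩
    · exact absurd ha (hA v hv x hx)
    · exact ⟨hx, ha⟩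
  · rintro ⟨hx, ha⟩; exact ⟨Or.inr hx, ha⟩

lemma card_side_eq {A B : Finset V} (hA : ∀ x ∈ A, ∀ y ∈ A, ¬ G.Adj x y)
    (hB : ∀ x ∈ B, ∀ y ∈ B, ¬ G.Adj x y)
    (hdeg : ∀ v ∈ A ∪ B, degIn G (A ∪ B) v = 2) : A.card = B.card := by
  have h1 : ∑ a ∈ A, (B.filter (G.Adj a)).card = 2 * A.card := by
    rw [Finset.sum_congr rfl fun a ha => ?_]
    · rw [Finset.sum_const, smul_eq_mul, mul_comm]
    · show (B.filter (G.Adj a)).card = 2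
      rw [← filterAB hA ha]
      exact hdeg a (Finset.mem_union_left _ ha)
  have h2 : ∑ b ∈ B, (A.filter (G.Adj b)).card = 2 * B.card := by
    rw [Finset.sum_congr rfl fun b hb => ?_]
    · rw [Finset.sum_const, smul_eq_mul, mul_comm]
    · show (A.filter (G.Adj b)).card = 2
      rw [← filterAB hB hb (B := A)]
      rw [Finset.union_comm]
      exact hdeg b (Finset.mem_union_right _ hb)
  have := double_count (G := G) A B
  omega

lemma evenHole_comp {A B : Finset V} (hA : ∀ x ∈ A, ∀ y ∈ A, ¬ G.Adj x y)
    (hB : ∀ x ∈ B, ∀ y ∈ B, ¬ G.Adj x y)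
    (hdeg : ∀ v ∈ A ∪ B, degIn G (A ∪ B) v = 2) {v : V} (hv : v ∈ A ∪ B) :
    IsEvenHole G (comp G (A ∪ B) v) := by
  set D := A ∪ B with hD
  set C := comp G D v with hC
  have hCD : C ⊆ D := comp_subset
  have hdegC : ∀ w ∈ C, (C.filter fun u => G.Adj w u).card = 2 := by
    intro w hw
    have : (C.filter fun u => G.Adj w u) = D.filter (G.Adj w) := filter_comp_eq hw
    rw [this]
    exact hdeg w (hCD hw)
  have hconn : (G.induce (C : Set V)).Connected :=
    connected_of_reach (mem_comp_self hv) (fun w hw => reach_in_comp hv (mem_comp.mp hw).2)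
  -- the two sides of C
  have hCsplit : C ∩ A ∪ C ∩ B = C := by
    rw [← Finset.inter_union_distrib_left, ← hD, Finset.inter_eq_left.mpr hCD]
  have hfA : ∀ a ∈ C ∩ A, ((C ∩ B).filter (G.Adj a)).card = 2 := by
    intro a ha
    have : (C ∩ B).filter (G.Adj a) = C.filter (G.Adj a) := by
      ext x
      simp only [Finset.mem_filter, Finset.mem_inter]
      constructor
      · rintro ⟨⟨hx, -⟩, hadj⟩; exact ⟨hx, hadj⟩
      · rintro ⟨hx, hadj⟩
        rcases Finset.mem_union.mp (hCD hx) with hxa | hxb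
        · exact absurd hadj (hA a (Finset.mem_inter.mp ha).2 x hxa)
        · exact ⟨⟨hx, hxb⟩, hadj⟩
    rw [this]; exact hdegC a (Finset.mem_inter.mp ha).1
  have hfB : ∀ b ∈ C ∩ B, ((C ∩ A).filter (G.Adj b)).card = 2 := by
    intro b hb
    have : (C ∩ A).filter (G.Adj b) = C.filter (G.Adj b) := by
      ext x
      simp only [Finset.mem_filter, Finset.mem_inter]
      constructor
      · rintro ⟨⟨hx, -⟩, hadj⟩; exact ⟨hx, hadj⟩
      · rintro ⟨hx, hadj⟩
        rcases Finset.mem_union.mp (hCD hx) with hxa | hxb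
        · exact ⟨⟨hx, hxa⟩, hadj⟩
        · exact absurd hadj (hB b (Finset.mem_inter.mp hb).2 x hxb)
    rw [this]; exact hdegC b (Finset.mem_inter.mp hb).1
  have hsum1 : ∑ a ∈ C ∩ A, ((C ∩ B).filter (G.Adj a)).card = 2 * (C ∩ A).card := by
    rw [Finset.sum_congr rfl hfA, Finset.sum_const, smul_eq_mul, mul_comm]
  have hsum2 : ∑ b ∈ C ∩ B, ((C ∩ A).filter (G.Adj b)).card = 2 * (C ∩ B).card := by
    rw [Finset.sum_congr rfl hfB, Finset.sum_const, smul_eq_mul, mul_comm]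
  have hdc := double_count (G := G) (C ∩ A) (C ∩ B)
  have hcardeq : (C ∩ A).card = (C ∩ B).card := by omega
  have hdisjC : Disjoint (C ∩ A) (C ∩ B) := by
    rw [Finset.disjoint_left]
    intro x hx1 hx2
    have hx1' := (Finset.mem_inter.mp hx1).2
    have hx2' := (Finset.mem_inter.mp hx2).2
    -- x ∈ A ∩ B: x would be adjacent to itself? derive a contradiction from degrees:
    -- instead: A and B cannot share x since x has a neighbor y ∈ D, adj x y, but
    -- y ∈ A or B contradicts hA or hB
    have hxD : x ∈ D := hCD (Finset.mem_inter.mp hx1).1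
    have h2 := hdeg x hxD
    have : (D.filter (G.Adj x)).Nonempty := by
      rw [← Finset.card_pos, ← degIn]
      omega
    obtain ⟨y, hy⟩ := this
    rcases Finset.mem_union.mp (Finset.mem_filter.mp hy).1 with hya | hyb
    · exact hA x hx1' y hya (Finset.mem_filter.mp hy).2
    · exact hB x hx2' y hyb (Finset.mem_filter.mp hy).2
  have hcardC : C.card = (C ∩ A).card + (C ∩ B).card := by
    conv_lhs => rw [← hCsplit]
    exact (Finset.card_union_of_disjoint hdisjC)
  -- C has at least 4 vertices
  have hge4 : 4 ≤ C.card := by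
    have hvC : v ∈ C := mem_comp_self hv
    have : 2 ≤ (C ∩ A).card := by
      rcases Finset.mem_union.mp hv with hva | hvb
      · have := hfA v (Finset.mem_inter.mpr ⟨hvC, hva⟩)
        have hle : ((C ∩ B).filter (G.Adj v)).card ≤ (C ∩ B).card :=
          Finset.card_le_card (Finset.filter_subset _ _)
        omega
      · have := hfB v (Finset.mem_inter.mpr ⟨hvC, hvb⟩)
        have hle : ((C ∩ A).filter (G.Adj v)).card ≤ (C ∩ A).card :=
          Finset.card_le_card (Finset.filter_subset _ _)
        omega
    omega
  exact ⟨⟨hge4, hconn, hdegC⟩, by rw [hcardC, ← hcardeq]; exact ⟨(C ∩ A).card, by omega⟩⟩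

lemma deg_CAEH {A B : Finset V} (hA : ∀ x ∈ A, ∀ y ∈ A, ¬ G.Adj x y)
    (hB : ∀ x ∈ B, ∀ y ∈ B, ¬ G.Adj x y)
    (hdeg : ∀ v ∈ A ∪ B, degIn G (A ∪ B) v = 2) :
    ComponentsAreEvenHoles G (A ∪ B) := by
  set D := A ∪ B with hD
  refine ⟨D.image (fun v => comp G D v), ?_, ?_, ?_⟩
  · intro C hC
    obtain ⟨v, hv, rfl⟩ := Finset.mem_image.mp hC
    exact evenHole_comp hA hB hdeg hv
  · intro C hC C' hC' hne x hx y hy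
    obtain ⟨v, hv, rfl⟩ := Finset.mem_image.mp hC
    obtain ⟨v', hv', rfl⟩ := Finset.mem_image.mp hC'
    constructor
    · rintro rfl
      exact hne ((comp_eq_of_mem hx).symm.trans (comp_eq_of_mem hy))
    · intro hadj
      have hyD : y ∈ D := comp_subset hy
      have : y ∈ comp G D v := comp_closed hx hadj hyD
      exact hne ((comp_eq_of_mem this).symm.trans (comp_eq_of_mem hy))
  · ext x
    rw [Finset.mem_sup]
    constructor
    · intro hx
      exact ⟨comp G D x, Finset.mem_image_of_mem _ hx, mem_comp_self hx⟩
    · rintro ⟨C, hC, hxC⟩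
      obtain ⟨v, hv, rfl⟩ := Finset.mem_image.mp hC
      exact comp_subset hxC

lemma CAEH_deg {D : Finset V} (hC : ComponentsAreEvenHoles G D) :
    ∀ v ∈ D, degIn G D v = 2 := by
  obtain ⟨𝒳, hhole, hsep, rfl⟩ := hC
  intro v hv
  obtain ⟨C, hC, hvC⟩ := Finset.mem_sup.mp hv
  have hfilter : (𝒳.sup id).filter (G.Adj v) = C.filter (G.Adj v) := by
    ext x
    simp only [Finset.mem_filter]
    constructor
    · rintro ⟨hx, hadj⟩
      obtain ⟨C', hC', hxC'⟩ := Finset.mem_sup.mp hx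
      by_cases hne : C = C'
      · exact ⟨hne ▸ hxC', hadj⟩
      · exact absurd hadj (hsep C hC C' hC' hne v hvC x hxC').2
    · rintro ⟨hx, hadj⟩
      exact ⟨Finset.mem_sup.mpr ⟨C, hC, hx⟩, hadj⟩
  rw [degIn, hfilter]
  exact (hhole C hC).1.2.2 v hvC

end Glue2


section Glue3
variable {V : Type u} [Fintype V] [DecidableEq V] {G : SimpleGraph V} {d : ℕ}
  {h : V → Matrix (Fin d) (Fin d) ℂ}

lemma indep_symmDiff {S S' P : Finset V} (hS : IsIndep G S) (hS' : IsIndep G S')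
    (hP : P ⊆ (S \ S') ∪ (S' \ S))
    (hsep : ∀ y ∈ P, ∀ x ∈ (S \ S') ∪ (S' \ S), x ∉ P → ¬ G.Adj y x) :
    IsIndep G (S ∆ P) := by
  have hPB : ∀ x ∈ P, x ∉ S → x ∈ S' := by
    intro x hx hxS
    rcases Finset.mem_union.mp (hP hx) with hh | hh
    · exact absurd (Finset.mem_sdiff.mp hh).1 hxS
    · exact (Finset.mem_sdiff.mp hh).1
  intro x hx y hy hadj
  rw [Finset.mem_symmDiff] at hx hy
  rcases hx with ⟨hxS, hxP⟩ | ⟨hxP, hxS⟩ <;> rcases hy with ⟨hyS, hyP⟩ | ⟨hyP, hyS⟩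
  · exact hS x hxS y hyS hadj
  · -- x ∈ S \ P, y ∈ P \ S (so y ∈ S')
    by_cases hxD : x ∈ (S \ S') ∪ (S' \ S)
    · exact absurd hadj.symm (hsep y hyP x hxD hxP)
    · have hxS' : x ∈ S' := by
        by_contra hxS'
        exact hxD (Finset.mem_union_left _ (Finset.mem_sdiff.mpr ⟨hxS, hxS'⟩))
      exact hS' x hxS' y (hPB y hyP hyS) hadj
  · by_cases hyD : y ∈ (S \ S') ∪ (S' \ S)
    · exact hsep x hxP y hyD hyP hadj
    · have hyS' : y ∈ S' := by
        by_contra hyS'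
        exact hyD (Finset.mem_union_left _ (Finset.mem_sdiff.mpr ⟨hyS, hyS'⟩))
      exact hS' x (hPB x hxP hxS) y hyS' hadj
  · exact hS' x (hPB x hxP hxS) y (hPB y hyP hyS) hadj

lemma pair_prod {b : V → ℝ}
    (hsq : ∀ v, h v * h v = ((b v : ℂ)) ^ 2 • (1 : Matrix (Fin d) (Fin d) ℂ))
    (hcomm : ∀ x y, x ≠ y → ¬ G.Adj x y → h x * h y = h y * h x)
    {X X' : Finset V} (hX : IsIndep G X) (hX' : IsIndep G X') :
    hProd h X * hProd h X' =
      (∏ v ∈ X ∩ X', ((b v : ℂ)) ^ 2) • (hProd h (X \ X') * hProd h (X' \ X)) := by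
  have pcX := pcOfIndep hcomm hX
  have pcX' := pcOfIndep hcomm hX'
  have h1 : hProd h X = hProd h (X \ X') * hProd h (X ∩ X') := by
    conv_lhs => rw [← Finset.sdiff_union_inter X X']
    exact hProd_union (Finset.disjoint_sdiff_inter X X')
      (by rw [Finset.sdiff_union_inter]; exact pcX)
  have h2 : hProd h X' = hProd h (X ∩ X') * hProd h (X' \ X) := by
    conv_lhs => rw [← Finset.sdiff_union_inter X' X, Finset.union_comm, Finset.inter_comm X' X]
    exact hProd_union (by
        rw [Finset.inter_comm]
        exact (Finset.disjoint_sdiff_inter X' X).symm)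
      (by rw [Finset.inter_comm X X', Finset.union_comm, Finset.sdiff_union_inter]; exact pcX')
  have hsqI := hProd_sq hsq (pairwise_subset pcX (Finset.inter_subset_left : X ∩ X' ⊆ X))
  calc hProd h X * hProd h X'
      = hProd h (X \ X') * (hProd h (X ∩ X') * hProd h (X ∩ X')) * hProd h (X' \ X) := by
        rw [h1, h2]; noncomm_ring
    _ = hProd h (X \ X') * ((∏ v ∈ X ∩ X', ((b v : ℂ)) ^ 2) • 1) * hProd h (X' \ X) := by
        rw [hsqI]
    _ = (∏ v ∈ X ∩ X', ((b v : ℂ)) ^ 2) • (hProd h (X \ X') * hProd h (X' \ X)) := by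
        rw [mul_smul_comm, mul_one, smul_mul_assoc]

end Glue3


section BadStep
variable {V : Type u} [Fintype V] [DecidableEq V] {G : SimpleGraph V} {d : ℕ}
  {h : V → Matrix (Fin d) (Fin d) ℂ}

lemma bad_step (hcf : ClawFree G) {b : V → ℝ}
    (hsq : ∀ v, h v * h v = ((b v : ℂ)) ^ 2 • (1 : Matrix (Fin d) (Fin d) ℂ))
    (hanti : ∀ x y, G.Adj x y → h x * h y = -(h y * h x))
    (hcomm : ∀ x y, x ≠ y → ¬ G.Adj x y → h x * h y = h y * h x)
    (u : ℂ) {S S' : Finset V} (hS : IsIndep G S) (hS' : IsIndep G S')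
    {v₀ : V} (hv₀D : v₀ ∈ (S \ S') ∪ (S' \ S))
    (hv₀d : degIn G ((S \ S') ∪ (S' \ S)) v₀ ≠ 2) :
    IsIndep G (S ∆ comp G ((S \ S') ∪ (S' \ S)) v₀) ∧
    IsIndep G (S' ∆ comp G ((S \ S') ∪ (S' \ S)) v₀) ∧
    ((S ∆ comp G ((S \ S') ∪ (S' \ S)) v₀) \ (S' ∆ comp G ((S \ S') ∪ (S' \ S)) v₀)) ∪
      ((S' ∆ comp G ((S \ S') ∪ (S' \ S)) v₀) \ (S ∆ comp G ((S \ S') ∪ (S' \ S)) v₀))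
      = (S \ S') ∪ (S' \ S) ∧
    S ∆ comp G ((S \ S') ∪ (S' \ S)) v₀ ≠ S ∧
    ((-u) ^ (S ∆ comp G ((S \ S') ∪ (S' \ S)) v₀).card *
        u ^ (S' ∆ comp G ((S \ S') ∪ (S' \ S)) v₀).card) •
      (hProd h (S ∆ comp G ((S \ S') ∪ (S' \ S)) v₀) *
        hProd h (S' ∆ comp G ((S \ S') ∪ (S' \ S)) v₀))
      + ((-u) ^ S.card * u ^ S'.card) • (hProd h S * hProd h S') = 0 := by
  classical
  set A := S \ S' with hA
  set B := S' \ S with hB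
  set D := A ∪ B with hD
  set P := comp G D v₀ with hP
  have hPD : P ⊆ D := comp_subset
  have hv₀P : v₀ ∈ P := mem_comp_self hv₀D
  have hPne : P.Nonempty := ⟨v₀, hv₀P⟩
  have hsep : ∀ y ∈ P, ∀ x ∈ D, x ∉ P → ¬ G.Adj y x := by
    intro y hy x hx hxP hadj
    exact hxP (comp_closed hy hadj hx)
  have hABdisj : Disjoint A B := by
    rw [Finset.disjoint_left]
    intro x hx hx'
    exact (Finset.mem_sdiff.mp hx).2 (Finset.mem_sdiff.mp hx').1
  have hPDm : ∀ x, x ∈ P → (x ∈ S ∧ x ∉ S') ∨ (x ∈ S' ∧ x ∉ S) := by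
    intro x hx
    rcases Finset.mem_union.mp (hPD hx) with hh | hh
    · exact Or.inl (Finset.mem_sdiff.mp hh)
    · exact Or.inr (Finset.mem_sdiff.mp hh)
  -- set identities
  have id1 : (S ∆ P) \ (S' ∆ P) = (A \ P) ∪ (B ∩ P) := by
    ext x
    have hxp := hPDm x
    simp only [Finset.mem_sdiff, Finset.mem_symmDiff, Finset.mem_union, Finset.mem_inter,
      hA, hB] at hxp ⊢
    tauto
  have id2 : (S' ∆ P) \ (S ∆ P) = (A ∩ P) ∪ (B \ P) := by
    ext x
    have hxp := hPDm x
    simp only [Finset.mem_sdiff, Finset.mem_symmDiff, Finset.mem_union, Finset.mem_inter,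
      hA, hB] at hxp ⊢
    tauto
  have id3 : (S ∆ P) ∩ (S' ∆ P) = S ∩ S' := by
    ext x
    have hxp := hPDm x
    simp only [Finset.mem_inter, Finset.mem_symmDiff] at hxp ⊢
    tauto
  have id4 : ((S ∆ P) \ (S' ∆ P)) ∪ ((S' ∆ P) \ (S ∆ P)) = D := by
    rw [id1, id2, hD]
    ext x
    have hxp := hPDm x
    simp only [Finset.mem_union, Finset.mem_inter, Finset.mem_sdiff, hA, hB] at hxp ⊢
    tauto
  have idP : P = (A ∩ P) ∪ (B ∩ P) := by
    ext x
    have hxp := hPDm x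
    simp only [Finset.mem_union, Finset.mem_inter, hA, hB, Finset.mem_sdiff] at hxp ⊢
    tauto
  -- independence of the swapped pair
  have hSt : IsIndep G (S ∆ P) := indep_symmDiff hS hS' hPD hsep
  have hSt' : IsIndep G (S' ∆ P) := by
    refine indep_symmDiff hS' hS ?_ ?_
    · rw [Finset.union_comm]; exact hPD
    · rw [Finset.union_comm]; exact hsep
  -- the swapped first set differs from the original
  have hne : S ∆ P ≠ S := by
    intro hh
    rw [symmDiff_eq_left] at hh
    exact hPne.ne_empty hh
  refine ⟨hSt, hSt', id4, hne, ?_⟩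
  -- cardinalities
  set a1 := (A \ P).card with ha1
  set a2 := (A ∩ P).card with ha2
  set b1 := (B \ P).card with hb1
  set b2 := (B ∩ P).card with hb2
  set i := (S ∩ S').card with hi
  have hdisj1 : Disjoint (A \ P) (B ∩ P) :=
    hABdisj.mono Finset.sdiff_subset Finset.inter_subset_left
  have hdisj2 : Disjoint (A ∩ P) (B \ P) :=
    hABdisj.mono Finset.inter_subset_left Finset.sdiff_subset
  have hdisj3 : Disjoint (A ∩ P) (B ∩ P) :=
    hABdisj.mono Finset.inter_subset_left Finset.inter_subset_left
  have hcardS : S.card = a1 + a2 + i := by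
    have c1 := Finset.card_sdiff_add_card_inter S S'
    have c2 := Finset.card_sdiff_add_card_inter A P
    rw [← hA] at c1
    omega
  have hcardS' : S'.card = b2 + b1 + i := by
    have c1 := Finset.card_sdiff_add_card_inter S' S
    have c2 := Finset.card_inter_add_card_sdiff B P
    rw [← hB] at c1
    have c3 : S' ∩ S = S ∩ S' := Finset.inter_comm _ _
    rw [c3] at c1
    omega
  have hcardSt : (S ∆ P).card = a1 + b2 + i := by
    have c1 := Finset.card_sdiff_add_card_inter (S ∆ P) (S' ∆ P)
    rw [id1, id3, Finset.card_union_of_disjoint hdisj1] at c1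
    omega
  have hcardSt' : (S' ∆ P).card = a2 + b1 + i := by
    have c1 := Finset.card_sdiff_add_card_inter (S' ∆ P) (S ∆ P)
    rw [id2, Finset.inter_comm (S' ∆ P) (S ∆ P), id3, Finset.card_union_of_disjoint hdisj2] at c1
    omega
  have hcardP : P.card = a2 + b2 := by
    conv_lhs => rw [idP]
    rw [Finset.card_union_of_disjoint hdisj3]
  -- the component is a path: edge counting via tree_count
  have hconnP : ∀ w ∈ P, Relation.ReflTransGen (rIn G P) v₀ w := fun w hw =>
    reach_in_comp hv₀D (mem_comp.mp hw).2
  have hdegle : ∀ w ∈ P, degIn G P w ≤ 2 := by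
    intro w hw
    rw [hP, degIn_comp hw]
    exact deg_le_two hcf hS hS' w (hPD hw)
  have hdef : ∃ w ∈ P, degIn G P w ≤ 1 := by
    refine ⟨v₀, hv₀P, ?_⟩
    have h1 : degIn G P v₀ = degIn G D v₀ := by rw [hP, degIn_comp hv₀P]
    have h2 := deg_le_two hcf hS hS' v₀ hv₀D
    rw [← hD] at h2  -- align
    omega
  have hsumP := tree_count (G := G) P.card P rfl v₀ hv₀P hconnP hdegle hdef
  -- split the degree sum into the two sides
  set eA := ∑ x ∈ A ∩ P, ((B ∩ P).filter (G.Adj x)).card with heA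
  set eB := ∑ y ∈ B ∩ P, ((A ∩ P).filter (G.Adj y)).card with heB
  have hsplit_deg : ∑ v ∈ P, degIn G P v = eA + eB := by
    rw [Finset.sum_congr idP (fun x _ => rfl), Finset.sum_union hdisj3]
    congr 1
    · refine Finset.sum_congr rfl fun x hx => ?_
      have hxA : x ∈ A := (Finset.mem_inter.mp hx).1
      have hxS : x ∈ S := (Finset.mem_sdiff.mp hxA).1
      unfold degIn
      congr 1
      ext y
      simp only [Finset.mem_filter, Finset.mem_inter]
      constructor
      · rintro ⟨hyP, hadj⟩
        rcases hPDm y hyP with hh | hh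
        · exact absurd hadj (hS x hxS y hh.1)
        · exact ⟨⟨Finset.mem_sdiff.mpr ⟨hh.1, hh.2⟩, hyP⟩, hadj⟩
      · rintro ⟨⟨-, hyP⟩, hadj⟩
        exact ⟨hyP, hadj⟩
    · refine Finset.sum_congr rfl fun x hx => ?_
      have hxB : x ∈ B := (Finset.mem_inter.mp hx).1
      have hxS' : x ∈ S' := (Finset.mem_sdiff.mp hxB).1
      unfold degIn
      congr 1
      ext y
      simp only [Finset.mem_filter, Finset.mem_inter]
      constructor
      · rintro ⟨hyP, hadj⟩
        rcases hPDm y hyP with hh | hh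
        · exact ⟨⟨Finset.mem_sdiff.mpr ⟨hh.1, hh.2⟩, hyP⟩, hadj⟩
        · exact absurd hadj (hS' x hxS' y hh.1)
      · rintro ⟨⟨-, hyP⟩, hadj⟩
        exact ⟨hyP, hadj⟩
  have hAB_count : eA = eB := by
    rw [heA, heB]
    exact double_count _ _
  have hPpos : 1 ≤ P.card := Finset.card_pos.mpr hPne
  have hm : a2 + b2 = eB + 1 := by omega
  -- the operator computation
  have pcS := pcOfIndep hcomm hS
  have pcS' := pcOfIndep hcomm hS'
  have pcSt := pcOfIndep hcomm hSt
  have pcSt' := pcOfIndep hcomm hSt'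
  have E1 := pair_prod hsq hcomm hS hS'
  have E2 := pair_prod hsq hcomm hSt hSt'
  rw [id1, id2, id3] at E2
  have hsplitA : hProd h A = hProd h (A \ P) * hProd h (A ∩ P) := by
    conv_lhs => rw [← Finset.sdiff_union_inter A P]
    exact hProd_union (Finset.disjoint_sdiff_inter A P)
      (by rw [Finset.sdiff_union_inter]
          exact pairwise_subset pcS (by rw [hA]; exact Finset.sdiff_subset))
  have hsplitB : hProd h B = hProd h (B ∩ P) * hProd h (B \ P) := by
    conv_lhs => rw [← Finset.sdiff_union_inter B P, Finset.union_comm]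
    exact hProd_union (Finset.disjoint_sdiff_inter B P).symm
      (by rw [Finset.union_comm, Finset.sdiff_union_inter]
          exact pairwise_subset pcS' (by rw [hB]; exact Finset.sdiff_subset))
  have hsplitAt : hProd h ((A \ P) ∪ (B ∩ P)) = hProd h (A \ P) * hProd h (B ∩ P) := by
    refine hProd_union hdisj1 ?_
    refine pairwise_subset pcSt ?_
    rw [← id1]
    exact Finset.sdiff_subset
  have hsplitBt : hProd h ((A ∩ P) ∪ (B \ P)) = hProd h (A ∩ P) * hProd h (B \ P) := by
    refine hProd_union hdisj2 ?_
    refine pairwise_subset pcSt' ?_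
    rw [← id2]
    exact Finset.sdiff_subset
  have hswap : hProd h (B ∩ P) * hProd h (A ∩ P)
      = (-1 : ℂ) ^ eB • (hProd h (A ∩ P) * hProd h (B ∩ P)) := by
    refine hProd_swap (pairwise_subset pcS' (by rw [hB]; exact Finset.inter_subset_left.trans Finset.sdiff_subset))
      (pairwise_subset pcS (by rw [hA]; exact Finset.inter_subset_left.trans Finset.sdiff_subset))
      (fun x _ y _ hadj => hanti x y hadj) ?_
    intro x hx y hy hnadj
    refine hcomm x y ?_ hnadj
    rintro rfl
    exact Finset.disjoint_left.mp hdisj3 hy hx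
  set W := hProd h (A \ P) with hW
  set M1 := hProd h (A ∩ P) with hM1
  set M2 := hProd h (B ∩ P) with hM2
  set Z := hProd h (B \ P) with hZ
  set c := ∏ v ∈ S ∩ S', ((b v : ℂ)) ^ 2 with hc
  have hmat : (W * M2) * (M1 * Z) = (-1 : ℂ) ^ eB • ((W * M1) * (M2 * Z)) := by
    calc (W * M2) * (M1 * Z) = W * ((M2 * M1) * Z) := by noncomm_ring
      _ = W * (((-1 : ℂ) ^ eB • (M1 * M2)) * Z) := by rw [hswap]
      _ = (-1 : ℂ) ^ eB • ((W * M1) * (M2 * Z)) := by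
          rw [smul_mul_assoc, mul_smul_comm]
          congr 1
          noncomm_ring
  have hkey : ((-u) ^ (S ∆ P).card * u ^ (S' ∆ P).card) * (-1 : ℂ) ^ eB
      = -((-u) ^ S.card * u ^ S'.card) := by
    rw [hcardSt, hcardSt', hcardS, hcardS']
    have h3 : (a1 + b2 + i) + eB + 1 = (a1 + a2 + i) + 2 * b2 := by omega
    have hsign : ((-1 : ℂ)) ^ (a1 + b2 + i) * (-1) ^ eB = -(-1) ^ (a1 + a2 + i) := by
      calc ((-1 : ℂ)) ^ (a1 + b2 + i) * (-1) ^ eB = (-1) ^ ((a1 + b2 + i) + eB) := by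
            rw [← pow_add]
        _ = -(-1) ^ ((a1 + b2 + i) + eB + 1) := by rw [pow_succ]; ring
        _ = -(-1) ^ ((a1 + a2 + i) + 2 * b2) := by rw [h3]
        _ = -(-1) ^ (a1 + a2 + i) := by rw [pow_add, pow_mul]; norm_num
    rw [neg_pow, neg_pow]
    linear_combination (u ^ (a1 + b2 + i) * u ^ (a2 + b1 + i)) * hsign
  rw [E1, E2, hsplitA, hsplitB, hsplitAt, hsplitBt]
  rw [hmat, smul_smul, smul_smul, smul_smul, ← add_smul]
  convert zero_smul ℂ (W * M1 * (M2 * Z)) using 2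
  linear_combination c * hkey

end BadStep

/-- The set-symmetric representation of the generalized characteristic polynomial
(established in the proof of Lemma 16):
`T_G(u)·T_G(−u) = Σ (−u²)^{|S|}·h(S)·h(S')`, summed over all ordered pairs `(S, S')` of
independent sets whose symmetric difference induces a disjoint union of even holes. -/
theorem transferOp_mul_transferOp_neg {V : Type u} [Fintype V] [DecidableEq V]
    (G : SimpleGraph V) (hcf : ClawFree G) (d : ℕ) (hd : 0 < d)
    (h : V → Matrix (Fin d) (Fin d) ℂ) (b : V → ℝ) (hb : ∀ v, b v ≠ 0)
    (hsq : ∀ v, h v * h v = ((b v : ℂ)) ^ 2 • (1 : Matrix (Fin d) (Fin d) ℂ))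
    (hanti : ∀ u v, G.Adj u v → h u * h v = -(h v * h u))
    (hcomm : ∀ u v, u ≠ v → ¬ G.Adj u v → h u * h v = h v * h u)
    (u : ℂ) :
    transferOp G h u * transferOp G h (-u) =
      ∑ p ∈ Finset.univ.filter (fun p : Finset V × Finset V =>
          IsIndep G p.1 ∧ IsIndep G p.2 ∧
            ComponentsAreEvenHoles G ((p.1 \ p.2) ∪ (p.2 \ p.1))),
        (-u ^ 2) ^ p.1.card • (hProd h p.1 * hProd h p.2) := by
  classical
  -- Step 1: expand the product of the two transfer operators into a sum over pairs
  have step1 : transferOp G h u * transferOp G h (-u)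
      = ∑ p ∈ Finset.univ.filter
          (fun p : Finset V × Finset V => IsIndep G p.1 ∧ IsIndep G p.2),
          ((-u) ^ p.1.card * u ^ p.2.card) • (hProd h p.1 * hProd h p.2) := by
    rw [transferOp, transferOp, Finset.sum_mul_sum, ← Finset.sum_product']
    have hset : ((Finset.univ.filter fun S : Finset V => IsIndep G S) ×ˢ
        (Finset.univ.filter fun S : Finset V => IsIndep G S))
        = Finset.univ.filter (fun p : Finset V × Finset V => IsIndep G p.1 ∧ IsIndep G p.2) := by
      ext p
      simp [Finset.mem_product]
    rw [hset]
    refine Finset.sum_congr rfl fun p hp => ?_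
    rw [smul_mul_smul_comm, neg_neg]
  rw [step1]
  -- Step 2: split off the pairs whose symmetric difference is not a union of even holes
  rw [← Finset.sum_filter_add_sum_filter_not
    (Finset.univ.filter (fun p : Finset V × Finset V => IsIndep G p.1 ∧ IsIndep G p.2))
    (fun p : Finset V × Finset V => ∀ v ∈ (p.1 \ p.2) ∪ (p.2 \ p.1),
      degIn G ((p.1 \ p.2) ∪ (p.2 \ p.1)) v = 2)]
  -- Step 3: the bad part vanishes by a sign-reversing involution
  have hbad : ∑ p ∈ (Finset.univ.filter
        (fun p : Finset V × Finset V => IsIndep G p.1 ∧ IsIndep G p.2)).filter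
        (fun p : Finset V × Finset V => ¬ ∀ v ∈ (p.1 \ p.2) ∪ (p.2 \ p.1),
          degIn G ((p.1 \ p.2) ∪ (p.2 \ p.1)) v = 2),
      ((-u) ^ p.1.card * u ^ p.2.card) • (hProd h p.1 * hProd h p.2) = 0 := by
    set Q : Finset V → Finset V := fun D =>
      if hs : (D.filter fun v => degIn G D v ≠ 2).Nonempty then comp G D hs.choose else ∅
      with hQ
    set g : Finset V × Finset V → Finset V × Finset V :=
      fun p => (p.1 ∆ Q ((p.1 \ p.2) ∪ (p.2 \ p.1)), p.2 ∆ Q ((p.1 \ p.2) ∪ (p.2 \ p.1)))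
      with hg
    -- facts about any member of the bad set
    have hfacts : ∀ p : Finset V × Finset V, p ∈ (Finset.univ.filter
        (fun p : Finset V × Finset V => IsIndep G p.1 ∧ IsIndep G p.2)).filter
        (fun p : Finset V × Finset V => ¬ ∀ v ∈ (p.1 \ p.2) ∪ (p.2 \ p.1),
          degIn G ((p.1 \ p.2) ∪ (p.2 \ p.1)) v = 2) →
        IsIndep G p.1 ∧ IsIndep G p.2 ∧
        (((p.1 \ p.2) ∪ (p.2 \ p.1)).filter
          (fun v => degIn G ((p.1 \ p.2) ∪ (p.2 \ p.1)) v ≠ 2)).Nonempty := by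
      intro p hp
      rw [Finset.mem_filter, Finset.mem_filter] at hp
      obtain ⟨⟨-, h1, h2⟩, h3⟩ := hp
      push_neg at h3
      obtain ⟨v, hv, hvd⟩ := h3
      exact ⟨h1, h2, ⟨v, Finset.mem_filter.mpr ⟨hv, hvd⟩⟩⟩
    refine Finset.sum_involution (fun p _ => g p) ?_ ?_ ?_ ?_
    · -- cancellation
      intro p hp
      obtain ⟨h1, h2, hne⟩ := hfacts p hp
      have hQp : Q ((p.1 \ p.2) ∪ (p.2 \ p.1))
          = comp G ((p.1 \ p.2) ∪ (p.2 \ p.1)) hne.choose := dif_pos hne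
      have hspec := hne.choose_spec
      rw [Finset.mem_filter] at hspec
      have hb := bad_step hcf hsq hanti hcomm u h1 h2 hspec.1 hspec.2
      rw [add_comm]
      simp only [hg, hQp]
      exact hb.2.2.2.2
    · -- the involution moves every bad pair
      intro p hp _
      obtain ⟨h1, h2, hne⟩ := hfacts p hp
      have hQp : Q ((p.1 \ p.2) ∪ (p.2 \ p.1))
          = comp G ((p.1 \ p.2) ∪ (p.2 \ p.1)) hne.choose := dif_pos hne
      have hspec := hne.choose_spec
      rw [Finset.mem_filter] at hspec
      have hb := bad_step hcf hsq hanti hcomm u h1 h2 hspec.1 hspec.2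
      intro heq
      apply hb.2.2.2.1
      have := congrArg Prod.fst heq
      simpa [hg, hQp] using this
    · -- the involution stays inside the bad set
      intro p hp
      obtain ⟨h1, h2, hne⟩ := hfacts p hp
      have hQp : Q ((p.1 \ p.2) ∪ (p.2 \ p.1))
          = comp G ((p.1 \ p.2) ∪ (p.2 \ p.1)) hne.choose := dif_pos hne
      have hspec := hne.choose_spec
      rw [Finset.mem_filter] at hspec
      have hb := bad_step hcf hsq hanti hcomm u h1 h2 hspec.1 hspec.2
      rw [Finset.mem_filter, Finset.mem_filter]
      have hD : ((g p).1 \ (g p).2) ∪ ((g p).2 \ (g p).1) = (p.1 \ p.2) ∪ (p.2 \ p.1) := by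
        simp only [hg, hQp]
        exact hb.2.2.1
      refine ⟨⟨Finset.mem_univ _, ?_, ?_⟩, ?_⟩
      · simp only [hg, hQp]; exact hb.1
      · simp only [hg, hQp]; exact hb.2.1
      · rw [hD]
        intro hall
        obtain ⟨v, hv⟩ := hne
        rw [Finset.mem_filter] at hv
        exact hv.2 (hall v hv.1)
    · -- the involution is an involution
      intro p hp
      obtain ⟨h1, h2, hne⟩ := hfacts p hp
      have hQp : Q ((p.1 \ p.2) ∪ (p.2 \ p.1))
          = comp G ((p.1 \ p.2) ∪ (p.2 \ p.1)) hne.choose := dif_pos hne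
      have hspec := hne.choose_spec
      rw [Finset.mem_filter] at hspec
      have hb := bad_step hcf hsq hanti hcomm u h1 h2 hspec.1 hspec.2
      have hD : ((g p).1 \ (g p).2) ∪ ((g p).2 \ (g p).1) = (p.1 \ p.2) ∪ (p.2 \ p.1) := by
        simp only [hg, hQp]
        exact hb.2.2.1
      have : g (g p) = p := by
        simp only [hg]
        rw [hD]
        exact Prod.ext (symmDiff_symmDiff_cancel_right _ _) (symmDiff_symmDiff_cancel_right _ _)
      exact this
  rw [hbad, add_zero]
  -- Step 4: the good part is exactly the even-hole sum
  have hgoodset : (Finset.univ.filter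
        (fun p : Finset V × Finset V => IsIndep G p.1 ∧ IsIndep G p.2)).filter
        (fun p : Finset V × Finset V => ∀ v ∈ (p.1 \ p.2) ∪ (p.2 \ p.1),
          degIn G ((p.1 \ p.2) ∪ (p.2 \ p.1)) v = 2)
      = Finset.univ.filter (fun p : Finset V × Finset V =>
          IsIndep G p.1 ∧ IsIndep G p.2 ∧
            ComponentsAreEvenHoles G ((p.1 \ p.2) ∪ (p.2 \ p.1))) := by
    rw [Finset.filter_filter]
    ext p
    simp only [Finset.mem_filter, Finset.mem_univ, true_and]
    constructor
    · rintro ⟨⟨h1, h2⟩, h3⟩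
      refine ⟨h1, h2, deg_CAEH ?_ ?_ h3⟩
      · intro x hx y hy
        exact h1 x (Finset.mem_sdiff.mp hx).1 y (Finset.mem_sdiff.mp hy).1
      · intro x hx y hy
        exact h2 x (Finset.mem_sdiff.mp hx).1 y (Finset.mem_sdiff.mp hy).1
    · rintro ⟨h1, h2, h3⟩
      exact ⟨⟨h1, h2⟩, CAEH_deg h3⟩
  rw [hgoodset]
  refine Finset.sum_congr rfl fun p hp => ?_
  rw [Finset.mem_filter] at hp
  obtain ⟨-, h1, h2, h3⟩ := hp
  have hdeg := CAEH_deg h3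
  have hAB : (p.1 \ p.2).card = (p.2 \ p.1).card := by
    refine card_side_eq ?_ ?_ hdeg
    · intro x hx y hy
      exact h1 x (Finset.mem_sdiff.mp hx).1 y (Finset.mem_sdiff.mp hy).1
    · intro x hx y hy
      exact h2 x (Finset.mem_sdiff.mp hx).1 y (Finset.mem_sdiff.mp hy).1
  have hk : p.2.card = p.1.card := by
    have c1 := Finset.card_sdiff_add_card_inter p.1 p.2
    have c2 := Finset.card_sdiff_add_card_inter p.2 p.1
    have c3 : p.2 ∩ p.1 = p.1 ∩ p.2 := Finset.inter_comm _ _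
    rw [c3] at c2
    omega
  rw [hk]
  congr 1
  rw [← mul_pow]
  congr 1
  ring
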